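/- Let p > 0, γ > 0, κ ≥ 0, L > 0, and let g, h : [0,p] → ℝ be differentiable with g κ-Lipschitz, g(c) ≤ L for all c, and h'(c) − p·g'(c) ≥ γ. Fix ū and Δ ≥ 0 with the property that the maximizer (c'',l'') of H(c,l)=p·l−c·l over S₂ = {(c,l): c∈[0,p], l∈[g(c),L], h(c)−p·l ≥ ū−Δ} satisfies c''+Δ/γ ≤ p. Let (c',l') maximize H over S₁ = {(c,l): c∈[0,p], l∈[g(c),L], h(c)−p·l ≥ ū}, and assume both maximizers exist. Then H(c'',l'') − H(c',l') ≤ (L+p)·(1+κ)·Δ/γ. -/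
import Mathlib


theorem stmt_8 (p γ κ L : ℝ) (hp : 0 < p) (hγ : 0 < γ) (hκ : 0 ≤ κ) (hL : 0 < L)
    (g h g' h' : ℝ → ℝ)
    (hg : ∀ c ∈ Set.Icc 0 p, HasDerivAt g (g' c) c)
    (hh : ∀ c ∈ Set.Icc 0 p, HasDerivAt h (h' c) c)
    (hgLip : ∀ x ∈ Set.Icc 0 p, ∀ y ∈ Set.Icc 0 p, |g x - g y| ≤ κ * |x - y|)
    (hgL : ∀ c ∈ Set.Icc 0 p, g c ≤ L)
    (hder : ∀ c ∈ Set.Icc 0 p, h' c - p * g' c ≥ γ)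
    (ubar Δ : ℝ) (hΔ : 0 ≤ Δ)
    (c' l' c'' l'' : ℝ)
    -- (c',l') maximizes H over S₁
    (hmem1 : c' ∈ Set.Icc 0 p ∧ l' ∈ Set.Icc (g c') L ∧ h c' - p * l' ≥ ubar)
    (hmax1 : ∀ c ∈ Set.Icc 0 p, ∀ l ∈ Set.Icc (g c) L, h c - p * l ≥ ubar →
        p * l - c * l ≤ p * l' - c' * l')
    -- (c'',l'') maximizes H over S₂
    (hmem2 : c'' ∈ Set.Icc 0 p ∧ l'' ∈ Set.Icc (g c'') L ∧ h c'' - p * l'' ≥ ubar - Δ)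
    (hmax2 : ∀ c ∈ Set.Icc 0 p, ∀ l ∈ Set.Icc (g c) L, h c - p * l ≥ ubar - Δ →
        p * l - c * l ≤ p * l'' - c'' * l'')
    (hroom : c'' + Δ / γ ≤ p) :
    (p * l'' - c'' * l'') - (p * l' - c' * l') ≤ (L + p) * (1 + κ) * Δ / γ := by
  obtain ⟨hc2, hl2, hu2⟩ := hmem2
  set t := Δ / γ with htdef
  have ht : 0 ≤ t := div_nonneg hΔ hγ.le
  have hγt : γ * t = Δ := by rw [htdef]; field_simp
  set cc := c'' + t with hccdef
  have hcc : cc ∈ Set.Icc 0 p := ⟨by linarith [hc2.1], hroom⟩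
  -- monotonicity of F = h - p*g - γ*id
  have hmono : MonotoneOn (fun c => h c - p * g c - γ * c) (Set.Icc 0 p) := by
    apply monotoneOn_of_deriv_nonneg (convex_Icc 0 p)
    · exact fun x hx => ((((hh x hx).sub ((hg x hx).const_mul p)).sub
        ((hasDerivAt_id x).const_mul γ)).continuousAt).continuousWithinAt
    · intro x hx
      rw [interior_Icc] at hx
      exact ((((hh x (Set.mem_Icc_of_Ioo hx)).sub
        ((hg x (Set.mem_Icc_of_Ioo hx)).const_mul p)).sub
        ((hasDerivAt_id x).const_mul γ)).differentiableAt).differentiableWithinAt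
    · intro x hx
      rw [interior_Icc] at hx
      have hx' := Set.mem_Icc_of_Ioo hx
      have hd : HasDerivAt (fun c => h c - p * g c - γ * c) (h' x - p * g' x - γ * 1) x :=
        ((hh x hx').sub ((hg x hx').const_mul p)).sub ((hasDerivAt_id x).const_mul γ)
      rw [hd.deriv]
      have := hder x hx'
      linarith
  have hF : h c'' - p * g c'' - γ * c'' ≤ h cc - p * g cc - γ * cc :=
    hmono hc2 hcc (by simp [hccdef]; linarith)
  have hkey : h cc - p * g cc ≥ h c'' - p * g c'' + Δ := by
    have : γ * cc = γ * c'' + Δ := by rw [hccdef, mul_add, hγt]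
    linarith
  -- candidate point
  set lhat := min (l'' + g cc - g c'') L with hlhatdef
  have hgccL := hgL cc hcc
  have hlhatmem : lhat ∈ Set.Icc (g cc) L := by
    constructor
    · apply le_min
      · linarith [hl2.1]
      · exact hgccL
    · exact min_le_right _ _
  have hlhatfeas : h cc - p * lhat ≥ ubar := by
    have h1 : lhat ≤ l'' + g cc - g c'' := min_le_left _ _
    nlinarith [hkey, hu2]
  have hcmp := hmax1 cc hcc lhat hlhatmem hlhatfeas
  -- Lipschitz bound
  have hlip : |g cc - g c''| ≤ κ * t := by
    have := hgLip cc hcc c'' hc2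
    rwa [hccdef, show c'' + t - c'' = t by ring, abs_of_nonneg ht] at this
  have habs := abs_le.mp hlip
  have hlhatlb : l'' - κ * t ≤ lhat := by
    apply le_min
    · linarith [habs.1]
    · nlinarith [hl2.2, mul_nonneg hκ ht]
  have hlhatub : lhat ≤ L := min_le_right _ _
  -- final arithmetic
  have hbound : (p * l'' - c'' * l'') - (p * lhat - cc * lhat) ≤ (L + p) * (1 + κ) * t := by
    have e1 : (p * l'' - c'' * l'') - (p * lhat - cc * lhat)
        = (p - c'') * (l'' - lhat) + t * lhat := by rw [hccdef]; ring
    have h2 : (p - c'') * (l'' - lhat) ≤ p * (κ * t) := by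
      rcases le_or_gt (l'' - lhat) 0 with hc | hc
      · nlinarith [hc2.2, mul_nonneg hκ ht]
      · nlinarith [hc2.1, hc2.2]
    have h3 : t * lhat ≤ t * L := by nlinarith
    have h4 : (L + p) * (1 + κ) * t = t * L + L * (κ * t) + p * t + p * (κ * t) := by ring
    have h5 : 0 ≤ L * (κ * t) := mul_nonneg hL.le (mul_nonneg hκ ht)
    have h6 : 0 ≤ p * t := mul_nonneg hp.le ht
    linarith
  calc (p * l'' - c'' * l'') - (p * l' - c' * l')
      ≤ (p * l'' - c'' * l'') - (p * lhat - cc * lhat) := by linarith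
    _ ≤ (L + p) * (1 + κ) * t := hbound
    _ = (L + p) * (1 + κ) * Δ / γ := by rw [htdef]; ring
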